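/- For every real β > 1 and every integer k with k ≥ β + 1, the generalized binomial coefficient satisfies |C(β,k)| ≤ (1 + (β·ln((β+1)²/k) + 2)/k)^k. -/

import Mathlib

open Finset

/-- log(1+1/x) ≤ 1/x for x > 0. -/
lemma aux_log_succ_le (x : ℝ) (hx : 0 < x) : Real.log (x + 1) - Real.log x ≤ 1 / x := by
  rw [← Real.log_div (by linarith) (ne_of_gt hx)]
  have := Real.log_le_sub_one_of_pos (x := (x+1)/x) (by positivity)
  have hx' : (x+1)/x - 1 = 1/x := by field_simp; ring
  linarith [hx'.symm ▸ this]

/-- log(1+1/x) ≥ 1/(x+1) for x > 0. -/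
lemma aux_log_succ_ge (x : ℝ) (hx : 0 < x) : 1 / (x + 1) ≤ Real.log (x + 1) - Real.log x := by
  rw [← Real.log_div (by linarith) (ne_of_gt hx)]
  have := Real.log_le_sub_one_of_pos (x := x/(x+1)) (by positivity)
  have h1 : Real.log (x/(x+1)) = - Real.log ((x+1)/x) := by
    rw [← Real.log_inv]; congr 1; field_simp
  have hx' : x/(x+1) - 1 = -(1/(x+1)) := by field_simp; ring
  rw [h1, hx'] at this
  linarith

/-- Harmonic upper bound: ∑_{j<n} 1/(j+1) ≤ 1 + log n for n ≥ 1. -/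
lemma aux_harmonic_ub : ∀ n : ℕ, 1 ≤ n → ∑ j ∈ range n, (1:ℝ)/(j+1) ≤ 1 + Real.log n := by
  intro n hn
  induction n with
  | zero => omega
  | succ m ih =>
    rcases Nat.eq_or_lt_of_le hn with h | h
    · simp [← h]
    · have hm : 1 ≤ m := by omega
      have hmpos : (0:ℝ) < m := by exact_mod_cast hm
      have h2 := aux_log_succ_ge (m:ℝ) hmpos
      rw [Finset.sum_range_succ]
      have : ((m:ℝ)+1) = ((m+1 : ℕ) : ℝ) := by push_cast; ring
      calc ∑ j ∈ range m, (1:ℝ)/(j+1) + 1/((m:ℝ)+1)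
          ≤ (1 + Real.log m) + (Real.log ((m:ℝ)+1) - Real.log m) := by
            have := ih hm; linarith
        _ = 1 + Real.log ((m+1 : ℕ) : ℝ) := by push_cast; ring

/-- Lower bound: log(n+1) - log(a+1) ≤ ∑_{j ∈ Ico a n} 1/(j+1). -/
lemma aux_sum_inv_lb (a : ℕ) : ∀ n : ℕ, a ≤ n →
    Real.log ((n:ℝ)+1) - Real.log ((a:ℝ)+1) ≤ ∑ j ∈ Finset.Ico a n, (1:ℝ)/(j+1) := by
  intro n
  induction n with
  | zero => intro h; interval_cases a; simp
  | succ m ih =>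
    intro h
    rcases Nat.eq_or_lt_of_le h with h' | h'
    · rw [← h']; simp
    · have ham : a ≤ m := by omega
      rw [Finset.sum_Ico_succ_top ham]
      have h2 := aux_log_succ_le ((m:ℝ)+1) (by positivity)
      have := ih ham
      push_cast
      push_cast at this h2
      linarith

/-- Unweighted AM-GM for a product over `range k`. -/
lemma aux_amgm (k : ℕ) (hk : 0 < k) (z : ℕ → ℝ) (hz : ∀ i ∈ range k, 0 ≤ z i) :
    ∏ i ∈ range k, z i ≤ ((∑ i ∈ range k, z i) / k) ^ k := by
  have hkR : (0:ℝ) < k := by exact_mod_cast hk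
  have hw : ∀ i ∈ range k, (0:ℝ) ≤ 1/k := fun i _ => by positivity
  have hw' : ∑ _i ∈ range k, (1:ℝ)/k = 1 := by
    rw [Finset.sum_const, card_range, nsmul_eq_mul]; field_simp
  have hgm := Real.geom_mean_le_arith_mean_weighted (range k) (fun _ => 1/(k:ℝ)) z hw hw' hz
  have hsum : ∑ i ∈ range k, (1:ℝ)/k * z i = (∑ i ∈ range k, z i) / k := by
    rw [Finset.sum_div]; apply Finset.sum_congr rfl; intro i _; ring
  rw [hsum] at hgm
  have hgprod : (∏ i ∈ range k, z i ^ ((1:ℝ)/k)) ^ k = ∏ i ∈ range k, z i := by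
    rw [← Finset.prod_pow]
    apply Finset.prod_congr rfl
    intro i hi
    rw [← Real.rpow_natCast (z i ^ ((1:ℝ)/k)) k, ← Real.rpow_mul (hz i hi)]
    rw [one_div, inv_mul_cancel₀ (ne_of_gt hkR), Real.rpow_one]
  calc ∏ i ∈ range k, z i = (∏ i ∈ range k, z i ^ ((1:ℝ)/k)) ^ k := hgprod.symm
    _ ≤ ((∑ i ∈ range k, z i) / k) ^ k := by
        apply pow_le_pow_left₀ _ hgm
        exact Finset.prod_nonneg fun i hi => Real.rpow_nonneg (hz i hi) _

/-- The generalized binomial coefficient `C(β,k) = β(β−1)⋯(β−k+1)/k!`. -/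
noncomputable def genBinom (β : ℝ) (k : ℕ) : ℝ :=
  (∏ j ∈ Finset.range k, (β - j)) / (k.factorial : ℝ)

/-- for `β > 1` and `k ≥ β + 1`,
`|C(β,k)| ≤ (1 + (β·ln((β+1)²/k) + 2)/k)^k`. -/
theorem stmt_5 (β : ℝ) (hβ : 1 < β) (k : ℕ) (hk : β + 1 ≤ (k : ℝ)) :
    |genBinom β k| ≤
      (1 + (β * Real.log ((β + 1) ^ 2 / (k : ℝ)) + 2) / (k : ℝ)) ^ k := by
  obtain ⟨b, hb⟩ : ∃ b : ℝ, b = β + 1 := ⟨β + 1, rfl⟩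
  have hb2 : 2 < b := by rw [hb]; linarith
  have hkb : b ≤ (k:ℝ) := by rw [hb]; exact hk
  have hkpos : 0 < k := by
    by_contra h
    push_neg at h
    interval_cases k
    simp at hk; linarith
  have hkR : (0:ℝ) < k := by exact_mod_cast hkpos
  -- step 1: |genBinom| = product of |β - j|/(j+1)
  have h1 : |genBinom β k| = ∏ j ∈ range k, |β - j| / (j+1) := by
    rw [genBinom, abs_div, abs_of_pos (by exact_mod_cast k.factorial_pos : (0:ℝ) < k.factorial),
      Finset.abs_prod, ← Finset.prod_range_add_one_eq_factorial]
    push_cast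
    rw [← Finset.prod_div_distrib]
  rw [h1]
  -- the sum
  set S : ℝ := ∑ j ∈ range k, |β - j| / (j+1) with hS
  have hSnn : 0 ≤ S := Finset.sum_nonneg fun i _ => by positivity
  -- AM-GM
  have hamgm : ∏ j ∈ range k, |β - j| / (j+1) ≤ (S/k)^k :=
    aux_amgm k hkpos _ (fun i _ => by positivity)
  -- split point
  set m : ℕ := ⌊β⌋₊ + 1 with hm
  have hmle : (⌊β⌋₊ : ℝ) ≤ β := Nat.floor_le (by linarith)
  have hmgt : β < (⌊β⌋₊ : ℝ) + 1 := Nat.lt_floor_add_one β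
  have hMle : (m:ℝ) ≤ b := by rw [hb]; push_cast [hm]; linarith
  have hMgt : b < (m:ℝ) + 1 := by rw [hb]; push_cast [hm]; linarith
  have hmk : m ≤ k := by
    have : (m:ℝ) ≤ (k:ℝ) := le_trans hMle hkb
    exact_mod_cast this
  -- sum split
  have hsplit : S = b * (∑ j ∈ range m, (1:ℝ)/(j+1)) - m + ((k:ℝ) - m)
      - b * (∑ j ∈ Finset.Ico m k, (1:ℝ)/(j+1)) := by
    rw [hS, ← Finset.sum_range_add_sum_Ico _ hmk]
    have e1 : ∑ j ∈ range m, |β - j| / (j+1)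
        = b * (∑ j ∈ range m, (1:ℝ)/(j+1)) - m := by
      have : ∑ j ∈ range m, |β - j| / (j+1)
          = ∑ j ∈ range m, (b * ((1:ℝ)/(j+1)) - 1) := by
        apply Finset.sum_congr rfl
        intro j hj
        have hjm : j < m := Finset.mem_range.mp hj
        have hjβ : (j:ℝ) ≤ β := by
          have : (j:ℝ) ≤ (⌊β⌋₊:ℝ) := by exact_mod_cast Nat.lt_succ_iff.mp hjm
          linarith
        rw [abs_of_nonneg (by linarith), hb]
        have hj1 : (0:ℝ) < (j:ℝ)+1 := by positivity
        field_simp; ring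
      rw [this, Finset.sum_sub_distrib, ← Finset.mul_sum]
      simp [Finset.card_range]
    have e2 : ∑ j ∈ Finset.Ico m k, |β - j| / (j+1)
        = ((k:ℝ) - m) - b * (∑ j ∈ Finset.Ico m k, (1:ℝ)/(j+1)) := by
      have : ∑ j ∈ Finset.Ico m k, |β - j| / (j+1)
          = ∑ j ∈ Finset.Ico m k, ((1:ℝ) - b * ((1:ℝ)/(j+1))) := by
        apply Finset.sum_congr rfl
        intro j hj
        have hjm : m ≤ j := (Finset.mem_Ico.mp hj).1
        have hjβ : β < (j:ℝ) := by
          have : (m:ℝ) ≤ (j:ℝ) := by exact_mod_cast hjm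
          linarith
        rw [abs_of_nonpos (by linarith), neg_sub, hb]
        have hj1 : (0:ℝ) < (j:ℝ)+1 := by positivity
        field_simp; ring
      rw [this, Finset.sum_sub_distrib, ← Finset.mul_sum]
      simp only [Finset.sum_const, Nat.card_Ico, nsmul_eq_mul, mul_one, Nat.cast_sub hmk]
    rw [e1, e2]
    ring
  -- bounds on the two harmonic pieces
  have hA : ∑ j ∈ range m, (1:ℝ)/(j+1) ≤ 1 + Real.log m :=
    aux_harmonic_ub m (by omega)
  have hB : Real.log ((k:ℝ)+1) - Real.log ((m:ℝ)+1) ≤ ∑ j ∈ Finset.Ico m k, (1:ℝ)/(j+1) :=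
    aux_sum_inv_lb m k hmk
  -- log facts
  have hbpos : (0:ℝ) < b := by linarith
  have hMpos : (0:ℝ) < m := by positivity
  have hlogMb : Real.log m ≤ Real.log b := Real.log_le_log hMpos hMle
  have hlogM1 : Real.log ((m:ℝ)+1) ≤ Real.log b + 1/b := by
    have h1 : Real.log ((m:ℝ)+1) ≤ Real.log (b+1) :=
      Real.log_le_log (by positivity) (by linarith)
    have h2 := aux_log_succ_le b hbpos
    linarith
  have hlogbk : Real.log b ≤ Real.log k := Real.log_le_log hbpos hkb
  have hlogkk1 : Real.log k ≤ Real.log ((k:ℝ)+1) := Real.log_le_log hkR (by linarith)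
  have hlogb : Real.log b ≤ b - 1 := Real.log_le_sub_one_of_pos hbpos
  -- the key sum bound
  have hkey : S ≤ (k:ℝ) + (β * Real.log ((β + 1) ^ 2 / (k : ℝ)) + 2) := by
    have hL : Real.log ((β + 1) ^ 2 / (k : ℝ)) = 2 * Real.log b - Real.log k := by
      rw [Real.log_div (by positivity) (ne_of_gt hkR), Real.log_pow, hb]
      push_cast
      ring
    rw [hL, hsplit]
    have hbA : b * (∑ j ∈ range m, (1:ℝ)/(j+1)) ≤ b * (1 + Real.log m) :=
      mul_le_mul_of_nonneg_left hA (le_of_lt hbpos)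
    have hbB : b * (Real.log ((k:ℝ)+1) - Real.log ((m:ℝ)+1))
        ≤ b * (∑ j ∈ Finset.Ico m k, (1:ℝ)/(j+1)) :=
      mul_le_mul_of_nonneg_left hB (le_of_lt hbpos)
    have hβb : β = b - 1 := by rw [hb]; ring
    rw [hβb]
    have hbig : b * (1 + Real.log m) - b * (Real.log ((k:ℝ)+1) - Real.log ((m:ℝ)+1))
        ≤ 2 * (m:ℝ) + ((b-1) * (2 * Real.log b - Real.log k) + 2) := by
      have e1 : b * Real.log m ≤ b * Real.log b :=
        mul_le_mul_of_nonneg_left hlogMb (le_of_lt hbpos)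
      have e2 : b * Real.log ((m:ℝ)+1) ≤ b * (Real.log b + 1/b) :=
        mul_le_mul_of_nonneg_left hlogM1 (le_of_lt hbpos)
      have e3 : b * Real.log k ≤ b * Real.log ((k:ℝ)+1) :=
        mul_le_mul_of_nonneg_left hlogkk1 (le_of_lt hbpos)
      have e4 : b * (1/b) = 1 := by field_simp
      nlinarith [hlogbk, hlogb, hMgt]
    linarith
  -- combine
  calc ∏ j ∈ range k, |β - j| / (j+1) ≤ (S/k)^k := hamgm
    _ ≤ (1 + (β * Real.log ((β + 1) ^ 2 / (k : ℝ)) + 2) / (k : ℝ)) ^ k := by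
        apply pow_le_pow_left₀ (by positivity)
        rw [div_le_iff₀ hkR] at *
        calc S ≤ (k:ℝ) + (β * Real.log ((β + 1) ^ 2 / (k : ℝ)) + 2) := hkey
          _ = (1 + (β * Real.log ((β + 1) ^ 2 / (k : ℝ)) + 2) / (k : ℝ)) * k := by
              field_simp
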